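/- Let k be an algebraically closed field and τ an endomorphism of k^{2n} having 2n distinct eigenvalues. Then there exists an n-dimensional subspace V with k^{2n} = V ⊕ τ(V); explicitly, if v₁,…,v_{2n} are eigenvectors for the distinct eigenvalues, V = span(v₁ + v₂, v₃ + v₄, …, v_{2n−1} + v_{2n}) works. -/
import Mathlib

theorem stmt_16 (k : Type*) [Field k] [IsAlgClosed k] (n : ℕ) (hn : 1 ≤ n)
    (τ : Module.End k (Fin (2 * n) → k))
    (lam : Fin (2 * n) → k) (hlam : Function.Injective lam)
    (v : Fin (2 * n) → (Fin (2 * n) → k))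
    (hv : ∀ i, v i ≠ 0 ∧ τ (v i) = lam i • v i) :
    let V : Submodule k (Fin (2 * n) → k) :=
      Submodule.span k (Set.range fun i : Fin n =>
        v ⟨2 * i.val, by omega⟩ + v ⟨2 * i.val + 1, by omega⟩)
    Module.finrank k V = n ∧ IsCompl V (V.map τ) := by
  intro V
  have hli : LinearIndependent k v :=
    τ.eigenvectors_linearIndependent' lam hlam v (fun i =>
      ⟨Module.End.mem_eigenspace_iff.mpr (hv i).2, (hv i).1⟩)
  have hcard : Fintype.card (Fin (2 * n)) = Module.finrank k (Fin (2 * n) → k) := by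
    simp [Module.finrank_fin_fun]
  haveI : Nonempty (Fin (2 * n)) := ⟨⟨0, by omega⟩⟩
  have hspanv : Submodule.span k (Set.range v) = ⊤ :=
    hli.span_eq_top_of_card_eq_finrank hcard
  set w : Fin n → (Fin (2 * n) → k) :=
    fun i => v ⟨2 * i.val, by omega⟩ + v ⟨2 * i.val + 1, by omega⟩ with hw
  have hVdef : V = Submodule.span k (Set.range w) := rfl
  -- sup is everything
  have hsup : V ⊔ V.map τ = ⊤ := by
    rw [eq_top_iff, ← hspanv, Submodule.span_le]
    rintro x ⟨j, rfl⟩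
    have hj2 : j.val / 2 < n := by omega
    set i : Fin n := ⟨j.val / 2, hj2⟩ with hi
    set a : Fin (2 * n) := ⟨2 * i.val, by omega⟩ with ha
    set b : Fin (2 * n) := ⟨2 * i.val + 1, by omega⟩ with hb
    have hwV : w i ∈ V ⊔ V.map τ :=
      Submodule.mem_sup_left (Submodule.subset_span ⟨i, rfl⟩)
    have hτwV : τ (w i) ∈ V ⊔ V.map τ :=
      Submodule.mem_sup_right ⟨w i, Submodule.subset_span ⟨i, rfl⟩, rfl⟩
    have hwi : w i = v a + v b := rfl
    have hτw : τ (w i) = lam a • v a + lam b • v b := by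
      rw [hwi, map_add, (hv a).2, (hv b).2]
    have hne : lam b - lam a ≠ 0 := by
      intro h
      have : lam b = lam a := by linear_combination h
      have := hlam this
      have : b.val = a.val := congrArg Fin.val this
      simp [ha, hb] at this
    have hva : v a = (lam b - lam a)⁻¹ • (lam b • w i - τ (w i)) := by
      rw [hτw, hwi]
      rw [smul_add]
      rw [show lam b • v a + lam b • v b - (lam a • v a + lam b • v b)
          = (lam b - lam a) • v a by module]
      rw [smul_smul, inv_mul_cancel₀ hne, one_smul]
    have hvb : v b = (lam b - lam a)⁻¹ • (τ (w i) - lam a • w i) := by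
      rw [hτw, hwi]
      rw [smul_add]
      rw [show lam a • v a + lam b • v b - (lam a • v a + lam a • v b)
          = (lam b - lam a) • v b by module]
      rw [smul_smul, inv_mul_cancel₀ hne, one_smul]
    have hja : j = a ∨ j = b := by
      rcases Nat.mod_two_eq_zero_or_one j.val with he | he
      · left; apply Fin.ext; show j.val = 2 * (j.val / 2); omega
      · right; apply Fin.ext; show j.val = 2 * (j.val / 2) + 1; omega
    rcases hja with h | h
    · rw [h, hva]
      exact Submodule.smul_mem _ _ (Submodule.sub_mem _ (Submodule.smul_mem _ _ hwV) hτwV)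
    · rw [h, hvb]
      exact Submodule.smul_mem _ _ (Submodule.sub_mem _ hτwV (Submodule.smul_mem _ _ hwV))
  -- dimension counts
  have hVle : Module.finrank k V ≤ n := by
    have := finrank_range_le_card (R := k) w
    simpa [Set.finrank, hVdef] using this
  have hmaple : Module.finrank k (V.map τ) ≤ Module.finrank k V :=
    Submodule.finrank_map_le τ V
  have hsum := Submodule.finrank_sup_add_finrank_inf_eq V (V.map τ)
  rw [hsup, finrank_top, Module.finrank_fin_fun] at hsum
  have hinf0 : Module.finrank k ↥(V ⊓ V.map τ) = 0 := by omega
  have hVn : Module.finrank k V = n := by omega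
  refine ⟨hVn, ?_⟩
  rw [isCompl_iff]
  constructor
  · rw [disjoint_iff]
    exact Submodule.finrank_eq_zero.mp hinf0
  · rw [codisjoint_iff]
    exact hsup
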